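/- Let Q(u,v) = k·u^{δ(1−βρ)}·((ρ−1)u+v)^{βδρ} be a 2-input VES production function on the domain D = {(u,v) ∈ ℝ² : u>0, v>0, (ρ−1)u+v>0}, with parameters satisfying k>0, 0<β<1, 0<βρ<1, δ>0. Then the Gaussian curvature K of the graph surface {(u,v,Q(u,v)) : (u,v) ∈ D} vanishes at every point of D if and only if δ = 1 (i.e., the VES production function has constant returns to scale if and only if the VES surface is developable). -/

import Mathlib

open Real

/-- Partial derivative in the first variable. -/
noncomputable def pdu (f : ℝ → ℝ → ℝ) : ℝ → ℝ → ℝ := fun u v => deriv (fun x => f x v) u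

/-- Partial derivative in the second variable. -/
noncomputable def pdv (f : ℝ → ℝ → ℝ) : ℝ → ℝ → ℝ := fun u v => deriv (fun y => f u y) v

/-- Hessian determinant `f_uu · f_vv − f_uv²` of `f` at `(u, v)`. -/
noncomputable def hessDet (f : ℝ → ℝ → ℝ) (u v : ℝ) : ℝ :=
  pdu (pdu f) u v * pdv (pdv f) u v - pdv (pdu f) u v ^ 2

/-- Gaussian curvature of the graph surface `{(u, v, f u v)}` at `(u, v)`:
`K = (f_uu · f_vv − f_uv²) / (1 + f_u² + f_v²)²`. -/
noncomputable def gaussK (f : ℝ → ℝ → ℝ) (u v : ℝ) : ℝ :=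
  hessDet f u v / (1 + pdu f u v ^ 2 + pdv f u v ^ 2) ^ 2

/-- The 2-input VES production function
`Q(u,v) = k · u^(δ(1−βρ)) · ((ρ−1)u + v)^(βδρ)`. -/
noncomputable def QVES (k β ρ δ : ℝ) : ℝ → ℝ → ℝ := fun u v =>
  k * u ^ (δ * (1 - β * ρ)) * ((ρ - 1) * u + v) ^ (β * δ * ρ)

/- Auxiliary lemmas -/

/-- Derivative in `x` of `c * x^p * ((ρ-1)x + v)^q`. -/
lemma hasDerivAt_term_u (c p q ρ v : ℝ) {x : ℝ} (hx : x ≠ 0) (hw : (ρ - 1) * x + v ≠ 0) :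
    HasDerivAt (fun x => c * x ^ p * ((ρ - 1) * x + v) ^ q)
      (c * (p * x ^ (p - 1) * ((ρ - 1) * x + v) ^ q
        + q * (ρ - 1) * x ^ p * ((ρ - 1) * x + v) ^ (q - 1))) x := by
  have h1 : HasDerivAt (fun x : ℝ => c * x ^ p) (c * (p * x ^ (p - 1))) x :=
    (Real.hasDerivAt_rpow_const (Or.inl hx)).const_mul c
  have hlin : HasDerivAt (fun x : ℝ => (ρ - 1) * x + v) (ρ - 1) x := by
    simpa using ((hasDerivAt_id x).const_mul (ρ - 1)).add_const v
  have h2 : HasDerivAt (fun x : ℝ => ((ρ - 1) * x + v) ^ q)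
      ((ρ - 1) * q * ((ρ - 1) * x + v) ^ (q - 1)) x := hlin.rpow_const (Or.inl hw)
  have := h1.mul h2
  exact this.congr_deriv (by ring)

/-- Derivative in `y` of `c * u^p * ((ρ-1)u + y)^q`. -/
lemma hasDerivAt_term_v (c p q ρ u : ℝ) {y : ℝ} (hw : (ρ - 1) * u + y ≠ 0) :
    HasDerivAt (fun y => c * u ^ p * ((ρ - 1) * u + y) ^ q)
      (c * u ^ p * (q * ((ρ - 1) * u + y) ^ (q - 1))) y := by
  have hlin : HasDerivAt (fun y : ℝ => (ρ - 1) * u + y) 1 y := by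
    simpa using (hasDerivAt_id y).const_add ((ρ - 1) * u)
  have h2 : HasDerivAt (fun y : ℝ => ((ρ - 1) * u + y) ^ q)
      (1 * q * ((ρ - 1) * u + y) ^ (q - 1)) y := hlin.rpow_const (Or.inl hw)
  have := h2.const_mul (c * u ^ p)
  exact this.congr_deriv (by ring)

/-- First partial in `u` of the VES function (as a generic power product). -/
lemma pdu_formula (k a b ρ : ℝ) {u v : ℝ} (hu : u ≠ 0) (hw : (ρ - 1) * u + v ≠ 0) :
    pdu (fun u v => k * u ^ a * ((ρ - 1) * u + v) ^ b) u v
      = k * (a * u ^ (a - 1) * ((ρ - 1) * u + v) ^ b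
        + b * (ρ - 1) * u ^ a * ((ρ - 1) * u + v) ^ (b - 1)) := by
  have := (hasDerivAt_term_u k a b ρ v hu hw).deriv
  simpa [pdu] using this

lemma pdv_formula (k a b ρ : ℝ) {u v : ℝ} (hw : (ρ - 1) * u + v ≠ 0) :
    pdv (fun u v => k * u ^ a * ((ρ - 1) * u + v) ^ b) u v
      = k * u ^ a * (b * ((ρ - 1) * u + v) ^ (b - 1)) := by
  have := (hasDerivAt_term_v k a b ρ u hw).deriv
  simpa [pdv] using this

theorem ves_developable_iff_constant_returns
    (k β ρ δ : ℝ) (hk : 0 < k) (hβ0 : 0 < β) (hβ1 : β < 1)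
    (hβρ0 : 0 < β * ρ) (hβρ1 : β * ρ < 1) (hδ : 0 < δ) :
    (∀ u v : ℝ, 0 < u → 0 < v → 0 < (ρ - 1) * u + v →
      gaussK (QVES k β ρ δ) u v = 0) ↔ δ = 1 := by
  set a := δ * (1 - β * ρ) with ha_def
  set b := β * δ * ρ with hb_def
  have ha : 0 < a := mul_pos hδ (by linarith)
  have hb : 0 < b := by
    have : b = δ * (β * ρ) := by ring
    rw [this]; exact mul_pos hδ hβρ0
  have hab : a + b = δ := by ring
  -- the Hessian determinant formula
  have hess : ∀ u v : ℝ, 0 < u → 0 < (ρ - 1) * u + v →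
      hessDet (QVES k β ρ δ) u v
        = k ^ 2 * a * b * (1 - δ) * (u ^ (a - 2)) ^ 2 * u ^ 2
            * (((ρ - 1) * u + v) ^ (b - 2)) ^ 2 * ((ρ - 1) * u + v) ^ 2 := by
    intro u v hu hw
    set w : ℝ := (ρ - 1) * u + v with hw_def
    -- second partial in v of first partial in u
    have hQ : QVES k β ρ δ = fun u v => k * u ^ a * ((ρ - 1) * u + v) ^ b := rfl
    have hpdu : ∀ x y : ℝ, 0 < x → 0 < (ρ - 1) * x + y →
        pdu (QVES k β ρ δ) x y
          = k * a * x ^ (a - 1) * ((ρ - 1) * x + y) ^ b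
            + k * (b * (ρ - 1)) * x ^ a * ((ρ - 1) * x + y) ^ (b - 1) := by
      intro x y hx hwx
      rw [hQ, pdu_formula k a b ρ hx.ne' hwx.ne']
      ring
    have hpdv : ∀ x y : ℝ, 0 < (ρ - 1) * x + y →
        pdv (QVES k β ρ δ) x y
          = k * x ^ a * (b * ((ρ - 1) * x + y) ^ (b - 1)) := by
      intro x y hwx
      rw [hQ]; exact pdv_formula k a b ρ hwx.ne'
    -- eventually-equalities near (u,v)
    have hwpos : ∀ᶠ x in nhds u, 0 < (ρ - 1) * x + v := by
      have hc : ContinuousAt (fun x : ℝ => (ρ - 1) * x + v) u := by fun_prop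
      exact hc.eventually_mem (isOpen_Ioi.mem_nhds hw)
    have hupos : ∀ᶠ x in nhds u, 0 < x := eventually_gt_nhds hu
    have hwpos' : ∀ᶠ y in nhds v, 0 < (ρ - 1) * u + y := by
      have hc : ContinuousAt (fun y : ℝ => (ρ - 1) * u + y) v := by fun_prop
      exact hc.eventually_mem (isOpen_Ioi.mem_nhds hw)
    -- Q_uu
    have hQuu : pdu (pdu (QVES k β ρ δ)) u v
        = k * a * ((a - 1) * u ^ (a - 2) * w ^ b + b * (ρ - 1) * u ^ (a - 1) * w ^ (b - 1))
          + k * (b * (ρ - 1)) * (a * u ^ (a - 1) * w ^ (b - 1)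
            + (b - 1) * (ρ - 1) * u ^ a * w ^ (b - 2)) := by
      have heq : (fun x => pdu (QVES k β ρ δ) x v) =ᶠ[nhds u]
          (fun x => k * a * x ^ (a - 1) * ((ρ - 1) * x + v) ^ b
            + k * (b * (ρ - 1)) * x ^ a * ((ρ - 1) * x + v) ^ (b - 1)) := by
        filter_upwards [hupos, hwpos] with x hx hwx
        exact hpdu x v hx hwx
      have hd1 := hasDerivAt_term_u (k * a) (a - 1) b ρ v hu.ne' hw.ne'
      have hd2 := hasDerivAt_term_u (k * (b * (ρ - 1))) a (b - 1) ρ v hu.ne' hw.ne'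
      have := (hd1.add hd2).deriv
      show deriv (fun x => pdu (QVES k β ρ δ) x v) u = _
      rw [heq.deriv_eq]; erw [this]
      have e1 : a - 1 - 1 = a - 2 := by ring
      have e2 : b - 1 - 1 = b - 2 := by ring
      rw [e1, e2]; try ring
    -- Q_uv
    have hQuv : pdv (pdu (QVES k β ρ δ)) u v
        = k * a * u ^ (a - 1) * (b * w ^ (b - 1))
          + k * (b * (ρ - 1)) * u ^ a * ((b - 1) * w ^ (b - 2)) := by
      have heq : (fun y => pdu (QVES k β ρ δ) u y) =ᶠ[nhds v]
          (fun y => k * a * u ^ (a - 1) * ((ρ - 1) * u + y) ^ b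
            + k * (b * (ρ - 1)) * u ^ a * ((ρ - 1) * u + y) ^ (b - 1)) := by
        filter_upwards [hwpos'] with y hwy
        exact hpdu u y hu hwy
      have hd1 := hasDerivAt_term_v (k * a) (a - 1) b ρ u hw.ne'
      have hd2 := hasDerivAt_term_v (k * (b * (ρ - 1))) a (b - 1) ρ u hw.ne'
      have := (hd1.add hd2).deriv
      show deriv (fun y => pdu (QVES k β ρ δ) u y) v = _
      rw [heq.deriv_eq]; erw [this]
      have e2 : b - 1 - 1 = b - 2 := by ring
      rw [e2]; try ring
    -- Q_vv
    have hQvv : pdv (pdv (QVES k β ρ δ)) u v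
        = k * u ^ a * (b * ((b - 1) * w ^ (b - 2))) := by
      have heq : (fun y => pdv (QVES k β ρ δ) u y) =ᶠ[nhds v]
          (fun y => k * b * u ^ a * ((ρ - 1) * u + y) ^ (b - 1)) := by
        filter_upwards [hwpos'] with y hwy
        rw [hpdv u y hwy]; ring
      have hd := hasDerivAt_term_v (k * b) a (b - 1) ρ u hw.ne'
      show deriv (fun y => pdv (QVES k β ρ δ) u y) v = _
      rw [heq.deriv_eq, hd.deriv]
      have e2 : b - 1 - 1 = b - 2 := by ring
      rw [e2]; try ring
    -- power reductions
    have hwp : 0 < w := hw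
    have pu1 : u ^ (a - 1) = u ^ (a - 2) * u := by
      rw [show a - 1 = (a - 2) + 1 by ring, Real.rpow_add hu, Real.rpow_one]
    have pu0 : u ^ a = u ^ (a - 2) * u ^ 2 := by
      rw [← Real.rpow_natCast u 2, ← Real.rpow_add hu]
      norm_num
    have pw1 : w ^ (b - 1) = w ^ (b - 2) * w := by
      rw [show b - 1 = (b - 2) + 1 by ring, Real.rpow_add hwp, Real.rpow_one]
    have pw0 : w ^ b = w ^ (b - 2) * w ^ 2 := by
      rw [← Real.rpow_natCast w 2, ← Real.rpow_add hwp]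
      norm_num
    rw [hessDet, hQuu, hQuv, hQvv, pu1, pu0, pw1, pw0, ← hab]
    ring
  constructor
  · intro h
    have hρ : 0 < ρ := by nlinarith
    have hw1 : 0 < (ρ - 1) * 1 + 1 := by linarith
    have hg := h 1 1 one_pos one_pos hw1
    rw [gaussK] at hg
    have hden : (1 + pdu (QVES k β ρ δ) 1 1 ^ 2 + pdv (QVES k β ρ δ) 1 1 ^ 2) ^ 2 ≠ 0 := by
      positivity
    have hzero : hessDet (QVES k β ρ δ) 1 1 = 0 := by
      field_simp at hg
      simpa using hg
    rw [hess 1 1 one_pos hw1] at hzero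
    have hρw : (0:ℝ) < (ρ - 1) * 1 + 1 := hw1
    have hp1 : (0:ℝ) < ((1:ℝ) ^ (a - 2)) ^ 2 := by
      rw [Real.one_rpow]; norm_num
    have hp2 : (0:ℝ) < (((ρ - 1) * 1 + 1) ^ (b - 2)) ^ 2 :=
      pow_pos (Real.rpow_pos_of_pos hρw _) 2
    have hp3 : (0:ℝ) < ((ρ - 1) * 1 + 1) ^ (2:ℕ) := pow_pos hρw 2
    have hk2 : (0:ℝ) < k ^ 2 := pow_pos hk 2
    have hP : (0:ℝ) < k ^ 2 * a * b * ((1:ℝ) ^ (a - 2)) ^ 2 * (1:ℝ) ^ 2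
        * (((ρ - 1) * 1 + 1) ^ (b - 2)) ^ 2 * ((ρ - 1) * 1 + 1) ^ 2 := by
      apply mul_pos (mul_pos (mul_pos (mul_pos (mul_pos (mul_pos hk2 ha) hb) hp1)
        (by norm_num)) hp2) hp3
    have hzero' : (1 - δ) * (k ^ 2 * a * b * ((1:ℝ) ^ (a - 2)) ^ 2 * (1:ℝ) ^ 2
        * (((ρ - 1) * 1 + 1) ^ (b - 2)) ^ 2 * ((ρ - 1) * 1 + 1) ^ 2) = 0 := by
      linear_combination hzero
    rcases mul_eq_zero.mp hzero' with h' | h'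
    · linarith
    · exact absurd h' hP.ne'
  · intro h1 u v hu hv hw
    rw [gaussK, hess u v hu hw, h1]
    simp
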